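/- Let K be the field of fractions of ℚ[u,v] and let d be a ℚ-linear derivation of K satisfying d(u) = v² and d(v) = v. Then in the formal power series ring K[[t]], (Σ_{n≥0} d^n(u^{-1}v) tⁿ/n!) · (u · Σ_{m≥0} t^{2m}/(2m)! + (v²-u) · Σ_{m≥0} t^{2m+1}/(2m+1)!) = v; that is, Σ_{n≥0} d^n(u^{-1}v) tⁿ/n! = v/(u·cosh(t) + (v²-u)·sinh(t)). -/

import Mathlib

open MvPolynomial

/-- The field of fractions of `ℚ[u,v]`. -/
abbrev FracK : Type := FractionRing (MvPolynomial (Fin 2) ℚ)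

/-- The image of the variable `u` in the field of fractions of `ℚ[u,v]`. -/
noncomputable def uK : FracK := algebraMap (MvPolynomial (Fin 2) ℚ) FracK (X 0)

/-- The image of the variable `v` in the field of fractions of `ℚ[u,v]`. -/
noncomputable def vK : FracK := algebraMap (MvPolynomial (Fin 2) ℚ) FracK (X 1)

/-- `cosh t = ∑_m t^{2m}/(2m)!` as a formal power series over `K`. -/
noncomputable def coshSeries : PowerSeries FracK :=
  PowerSeries.mk fun j => if Even j then ((j.factorial : FracK))⁻¹ else 0

/-- `sinh t = ∑_m t^{2m+1}/(2m+1)!` as a formal power series over `K`. -/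
noncomputable def sinhSeries : PowerSeries FracK :=
  PowerSeries.mk fun j => if Even j then 0 else ((j.factorial : FracK))⁻¹

open PowerSeries

/-- The "exponential of `t·d`" applied to an element. -/
noncomputable def expDer (d : Derivation ℚ FracK FracK) (x : FracK) : PowerSeries FracK :=
  PowerSeries.mk fun n => ((n.factorial : FracK))⁻¹ * (⇑d)^[n] x

theorem coeff_expDer (d : Derivation ℚ FracK FracK) (x : FracK) (n : ℕ) :
    coeff n (expDer d x) = ((n.factorial : FracK))⁻¹ * (⇑d)^[n] x :=
  coeff_mk _ _

theorem iter_add (d : Derivation ℚ FracK FracK) (n : ℕ) (x y : FracK) :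
    (⇑d)^[n] (x + y) = (⇑d)^[n] x + (⇑d)^[n] y := by
  induction n generalizing x y with
  | zero => simp
  | succ n ih => simp [Function.iterate_succ_apply, ih]

theorem expDer_add (d : Derivation ℚ FracK FracK) (x y : FracK) :
    expDer d (x + y) = expDer d x + expDer d y := by
  ext n
  simp [coeff_expDer, iter_add, mul_add]

theorem deriv_expDer (d : Derivation ℚ FracK FracK) (x : FracK) :
    d⁄dX FracK (expDer d x) = expDer d (d x) := by
  ext n
  rw [coeff_derivative, coeff_expDer, coeff_expDer, Function.iterate_succ_apply]
  have h : ((n + 1).factorial : FracK) = (n.factorial : FracK) * (n + 1) := by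
    push_cast [Nat.factorial_succ]; ring
  have h1 : (n.factorial : FracK) ≠ 0 := Nat.cast_ne_zero.2 (Nat.factorial_ne_zero n)
  have h2 : ((n : FracK) + 1) ≠ 0 := by
    have := Nat.cast_ne_zero (R := FracK).2 (Nat.succ_ne_zero n)
    push_cast at this; exact this
  rw [h]
  field_simp [h]

theorem expDer_mul (d : Derivation ℚ FracK FracK) (x y : FracK) :
    expDer d (x * y) = expDer d x * expDer d y := by
  ext n
  induction n generalizing x y with
  | zero =>
    simp [coeff_zero_eq_constantCoeff, map_mul, constantCoeff_mk, expDer]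
  | succ n ih =>
    have h2 : ((n : FracK) + 1) ≠ 0 := by
      have := Nat.cast_ne_zero (R := FracK).2 (Nat.succ_ne_zero n)
      push_cast at this; exact this
    have key : coeff n (d⁄dX FracK (expDer d (x * y))) =
        coeff n (d⁄dX FracK (expDer d x * expDer d y)) := by
      rw [deriv_expDer, d.leibniz, smul_eq_mul, smul_eq_mul, expDer_add, map_add, ih, ih,
        Derivation.leibniz, deriv_expDer, deriv_expDer, smul_eq_mul, smul_eq_mul, map_add]
    have e1 : coeff (n + 1) (expDer d (x * y)) * ((n : FracK) + 1) =
        coeff (n + 1) (expDer d x * expDer d y) * ((n : FracK) + 1) := by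
      rw [← coeff_derivative, ← coeff_derivative]; exact key
    exact mul_right_cancel₀ h2 e1

theorem iter_v (d : Derivation ℚ FracK FracK) (hv : d vK = vK) (n : ℕ) :
    (⇑d)^[n] vK = vK := by
  induction n with
  | zero => rfl
  | succ n ih => rw [Function.iterate_succ_apply', ih, hv]

theorem algebraMap_fact (n : ℕ) :
    algebraMap ℚ FracK (1 / n.factorial) = ((n.factorial : FracK))⁻¹ := by
  rw [one_div, map_inv₀, map_natCast]

theorem expDer_v (d : Derivation ℚ FracK FracK) (hv : d vK = vK) :
    expDer d vK = PowerSeries.C vK * PowerSeries.exp FracK := by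
  ext n
  rw [coeff_expDer, iter_v d hv, PowerSeries.coeff_C_mul, PowerSeries.coeff_exp, algebraMap_fact]
  ring

theorem iter_u (d : Derivation ℚ FracK FracK) (hu : d uK = vK ^ 2) (hv : d vK = vK) (n : ℕ) :
    (⇑d)^[n + 1] uK = (2 : FracK) ^ n * vK ^ 2 := by
  induction n with
  | zero => simpa using hu
  | succ n ih =>
    have h0 : d ((2 : FracK) ^ n) = 0 := by
      have h : ((2 : FracK) ^ n) = algebraMap ℚ FracK (2 ^ n) := by push_cast; norm_num
      rw [h, Derivation.map_algebraMap]
    have h2 : d (vK ^ 2) = vK ^ 2 + vK ^ 2 := by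
      rw [pow_two, d.leibniz, hv, smul_eq_mul]
    rw [Function.iterate_succ_apply', ih, d.leibniz, h0, h2, smul_eq_mul, smul_eq_mul]
    ring

theorem expDer_u2 (d : Derivation ℚ FracK FracK) (hu : d uK = vK ^ 2) (hv : d vK = vK) :
    expDer d uK + expDer d uK =
      PowerSeries.C (2 * uK - vK ^ 2) +
        PowerSeries.C (vK ^ 2) * PowerSeries.rescale (2 : FracK) (PowerSeries.exp FracK) := by
  ext n
  rw [map_add, coeff_expDer, map_add, PowerSeries.coeff_C_mul, PowerSeries.coeff_rescale, PowerSeries.coeff_exp, algebraMap_fact]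
  cases n with
  | zero => simp [coeff_zero_eq_constantCoeff, expDer]; ring
  | succ n =>
    rw [iter_u d hu hv n, PowerSeries.coeff_C, if_neg (Nat.succ_ne_zero n)]
    have h1 : ((n + 1).factorial : FracK) ≠ 0 := Nat.cast_ne_zero.2 (Nat.factorial_ne_zero _)
    field_simp
    ring

theorem cosh2 : coshSeries + coshSeries =
    PowerSeries.exp FracK + PowerSeries.rescale (-1 : FracK) (PowerSeries.exp FracK) := by
  ext n
  rw [map_add, map_add, coeff_rescale, coeff_exp, algebraMap_fact, coshSeries, coeff_mk]
  rcases Nat.even_or_odd n with h | h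
  · rw [if_pos h, h.neg_one_pow]; ring
  · rw [if_neg (Nat.not_even_iff_odd.2 h), h.neg_one_pow]; ring

theorem sinh2 : sinhSeries + sinhSeries =
    PowerSeries.exp FracK - PowerSeries.rescale (-1 : FracK) (PowerSeries.exp FracK) := by
  ext n
  rw [map_add, map_sub, coeff_rescale, coeff_exp, algebraMap_fact, sinhSeries, coeff_mk]
  rcases Nat.even_or_odd n with h | h
  · rw [if_pos h, h.neg_one_pow]; ring
  · rw [if_neg (Nat.not_even_iff_odd.2 h), h.neg_one_pow]; ring

theorem stmt15 (d : Derivation ℚ FracK FracK)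
    (hu : d uK = vK ^ 2) (hv : d vK = vK) :
    (PowerSeries.mk fun n => ((n.factorial : FracK))⁻¹ * (⇑d)^[n] (uK⁻¹ * vK)) *
        (PowerSeries.C uK * coshSeries +
         PowerSeries.C (vK ^ 2 - uK) * sinhSeries) =
      PowerSeries.C vK := by
  classical
  have hu0 : uK ≠ 0 := by
    simp only [uK, ne_eq, IsFractionRing.to_map_eq_zero_iff]
    exact X_ne_zero 0
  set f := expDer d (uK⁻¹ * vK) with hf
  have hfeq : (PowerSeries.mk fun n => ((n.factorial : FracK))⁻¹ * (⇑d)^[n] (uK⁻¹ * vK)) = f := rfl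
  rw [hfeq]
  set Xe := PowerSeries.exp FracK with hXe
  set Ye := PowerSeries.rescale (-1 : FracK) (PowerSeries.exp FracK) with hYe
  have hXY : Xe * Ye = 1 := by
    have h := PowerSeries.exp_mul_exp_eq_exp_add (1 : FracK) (-1)
    simp only [PowerSeries.rescale_one, RingHom.id_apply, add_neg_cancel,
      PowerSeries.rescale_zero, RingHom.comp_apply] at h
    rw [hXe, hYe, h]
    simp [PowerSeries.constantCoeff_exp]
  have hXX : PowerSeries.rescale (2 : FracK) (PowerSeries.exp FracK) = Xe * Xe := by
    have h := PowerSeries.exp_mul_exp_eq_exp_add (1 : FracK) 1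
    simp only [PowerSeries.rescale_one, RingHom.id_apply] at h
    norm_num at h
    rw [hXe, ← h]
  have h5 : f * expDer d uK = PowerSeries.C vK * Xe := by
    rw [hf, ← expDer_mul]
    have : uK⁻¹ * vK * uK = vK := by field_simp
    rw [this, expDer_v d hv, hXe]
  have h4 : expDer d uK + expDer d uK =
      PowerSeries.C (2 * uK - vK ^ 2) + PowerSeries.C (vK ^ 2) * (Xe * Xe) := by
    rw [← hXX]; exact expDer_u2 d hu hv
  have h1 : coshSeries + coshSeries = Xe + Ye := cosh2
  have h2 : sinhSeries + sinhSeries = Xe - Ye := sinh2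
  have hne : (2 : PowerSeries FracK) * Xe ≠ 0 := by
    intro h
    have hc := congrArg (PowerSeries.constantCoeff) h
    simp only [map_mul, map_zero, hXe, PowerSeries.constantCoeff_exp, map_ofNat, mul_one] at hc
    exact two_ne_zero hc
  apply mul_right_cancel₀ hne
  simp only [map_sub, map_mul, map_pow, map_ofNat] at h4 ⊢
  linear_combination (f * Xe * PowerSeries.C uK) * h1 +
    (f * Xe * ((PowerSeries.C vK) ^ 2 - PowerSeries.C uK)) * h2 +
    (f * (2 * PowerSeries.C uK - (PowerSeries.C vK) ^ 2)) * hXY +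
    (- f) * h4 + 2 * h5
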